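/- For positive integers r and s, the descent polynomial A_𝐦(x,y) of the multiset with r letters of multiplicity 1 and s letters of multiplicity 2 equals G^s(T^r(x)), where T = xy(∂_x+∂_y) and G = xy²(∂_x+∂_y) + (x²y²/2)(∂_x²+∂_y²) + x²y² ∂_x∂_y; in particular, by the commutativity TG = GT, A_𝐦(x,y) depends only on r and s and not on the order of the multiplicities. -/

import Mathlib

open MvPolynomial

/-- Number of descents in `a :: rest`, counting consecutive pairs. -/
def desAux : List ℕ → ℕ
  | a :: b :: t => (if b < a then 1 else 0) + desAux (b :: t)
  | _ => 0

/-- The descent number of a word `w = π₁…π_m`, with the boundary convention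
`π₀ = π_{m+1} = 0`. -/
def des (w : List ℕ) : ℕ := desAux (0 :: (w ++ [0]))

/-- The list of all distinct arrangements (multipermutations) of a multiset. -/
noncomputable def arrangements (M : Multiset ℕ) : List (List ℕ) :=
  M.toList.permutations.dedup

/-- The multiset `{1^{m₁}, 2^{m₂}, …, n^{m_n}}` encoded by the list of
multiplicities `ms = [m₁, …, m_n]`. -/
def msetOf (ms : List ℕ) : Multiset ℕ :=
  ((List.range ms.length).flatMap fun i => List.replicate (ms.getD i 0) (i + 1) : List ℕ)

/-- The homogenized multiset Eulerian polynomial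
`A_𝐦(x,y) = Σ_π x^{des π} y^{m+1-des π}`. -/
noncomputable def Abi (ms : List ℕ) : MvPolynomial (Fin 2) ℚ :=
  ((arrangements (msetOf ms)).map fun w =>
    X 0 ^ des w * X 1 ^ ((msetOf ms).card + 1 - des w)).sum

/-- The multiset Eulerian polynomial `A_𝐦(x) = Σ_π x^{des π}`. -/
noncomputable def Auni (ms : List ℕ) : Polynomial ℚ :=
  ((arrangements (msetOf ms)).map fun w => Polynomial.X ^ des w).sum

/-- The Eulerian operator `T = xy(∂/∂x + ∂/∂y)`. -/
noncomputable def Teul (f : MvPolynomial (Fin 2) ℚ) : MvPolynomial (Fin 2) ℚ :=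
  X 0 * X 1 * (pderiv (0 : Fin 2) f + pderiv (1 : Fin 2) f)

/-- The Eulerian operator `G = xy²(∂_x+∂_y) + (x²y²/2)(∂_x²+∂_y²) + x²y² ∂_x∂_y`. -/
noncomputable def Gop (f : MvPolynomial (Fin 2) ℚ) : MvPolynomial (Fin 2) ℚ :=
  X 0 * X 1 ^ 2 * (pderiv (0 : Fin 2) f + pderiv (1 : Fin 2) f)
    + C (1 / 2 : ℚ) * (X 0 ^ 2 * X 1 ^ 2) *
        (pderiv (0 : Fin 2) (pderiv (0 : Fin 2) f) + pderiv (1 : Fin 2) (pderiv (1 : Fin 2) f))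
    + X 0 ^ 2 * X 1 ^ 2 * pderiv (0 : Fin 2) (pderiv (1 : Fin 2) f)

/-- the gap-descent indicator: gap `j` of `w` (between positions j-1 and j,
with boundary 0s) is a descent. -/
def gapB (w : List ℕ) (j : ℕ) : Bool := (w ++ [0]).getD j 0 < (0 :: w).getD j 0

lemma desAux_cons₂ (a b : ℕ) (t : List ℕ) :
    desAux (a :: b :: t) = (if b < a then 1 else 0) + desAux (b :: t) := rfl

lemma desAux_cons (x : ℕ) (l : List ℕ) (h : l ≠ []) :
    desAux (x :: l) = (if l.getD 0 0 < x then 1 else 0) + desAux l := by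
  cases l with
  | nil => simp at h
  | cons b t => rfl

lemma desAux_zero_cons (l : List ℕ) : desAux (0 :: l) = desAux l := by
  cases l with
  | nil => rfl
  | cons b t => simp [desAux_cons₂]

lemma desAux_cons_le : ∀ (b : ℕ) (t : List ℕ), desAux (b :: t) ≤ t.length
  | _, [] => le_refl _
  | b, c :: t => by
      rw [desAux_cons₂]
      have := desAux_cons_le c t
      simp only [List.length_cons]
      split <;> omega

lemma des_le (w : List ℕ) : des w ≤ w.length := by
  rw [des, desAux_zero_cons]
  cases w with
  | nil => simp [desAux]
  | cons x t =>
    have h := desAux_cons_le x (t ++ [0])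
    simpa using h

lemma desAux_eq_filter (a : ℕ) (l : List ℕ) :
    desAux (a :: l) =
      ((List.range l.length).filter
        (fun j => decide (l.getD j 0 < (a :: l).getD j 0))).length := by
  induction l generalizing a with
  | nil => simp [desAux]
  | cons b t ih =>
    rw [desAux_cons₂, List.length_cons, List.range_succ_eq_map]
    rw [List.filter_cons, List.filter_map]
    have : ((List.range t.length).filter
        ((fun j => decide ((b :: t).getD j 0 < (a :: b :: t).getD j 0)) ∘ Nat.succ))
        = (List.range t.length).filter (fun j => decide (t.getD j 0 < (b :: t).getD j 0)) := by
      apply List.filter_congr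
      intro j hj
      simp [List.getD_cons_succ]
    rw [this]
    simp only [List.getD_cons_zero]
    rw [ih b]
    by_cases hba : b < a <;> simp [hba, Nat.add_comm]

lemma des_eq_filter (w : List ℕ) :
    des w = ((List.range (w.length + 1)).filter (fun j => gapB w j)).length := by
  rw [des, desAux_eq_filter]
  have hlen : (w ++ [0]).length = w.length + 1 := by simp
  rw [hlen]
  congr 1
  apply List.filter_congr
  intro j hj
  simp only [List.mem_range] at hj
  have : (0 :: (w ++ [0])).getD j 0 = (0 :: w).getD j 0 := by
    cases j with
    | zero => rfl
    | succ i =>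
      simp only [List.getD_cons_succ]
      have hi : i < w.length := by omega
      rw [List.getD_append _ _ _ _ hi]
  rw [this]
  simp [gapB]

lemma desAux_insertIdx : ∀ (j : ℕ) (t : List ℕ) (a L : ℕ), j ≤ t.length → a ≤ L →
    (∀ x ∈ t, x ≤ L) →
    desAux (a :: (t.insertIdx j L ++ [0]))
        + (if (t ++ [0]).getD j 0 < (a :: t).getD j 0 then 1 else 0)
      = desAux (a :: (t ++ [0])) + (if (t ++ [0]).getD j 0 < L then 1 else 0)
  | 0, t, a, L, hj, haL, ht => by
    simp only [List.insertIdx_zero, List.getD_cons_zero]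
    have h1 : desAux (a :: L :: t ++ [0]) = (if L < a then 1 else 0) + desAux (L :: (t ++ [0])) := rfl
    have h2 : desAux (L :: (t ++ [0])) =
        (if (t ++ [0]).getD 0 0 < L then 1 else 0) + desAux (t ++ [0]) :=
      desAux_cons _ _ (by simp)
    have h3 : desAux (a :: (t ++ [0])) =
        (if (t ++ [0]).getD 0 0 < a then 1 else 0) + desAux (t ++ [0]) :=
      desAux_cons _ _ (by simp)
    have hLa : ¬ L < a := by omega
    simp only [List.cons_append] at h1 h2 h3 ⊢
    rw [h1, h2, h3, if_neg hLa]
    split_ifs <;> omega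
  | (j+1), [], a, L, hj, haL, ht => by simp at hj
  | (j+1), x :: t', a, L, hj, haL, ht => by
    have hx : x ≤ L := ht x (by simp)
    have ih := desAux_insertIdx j t' x L (by simpa using hj) hx
      (fun y hy => ht y (by simp [hy]))
    simp only [List.insertIdx_succ_cons]
    have e1 : desAux (a :: (x :: t'.insertIdx j L) ++ [0])
        = (if x < a then 1 else 0) + desAux (x :: (t'.insertIdx j L ++ [0])) := rfl
    have e2 : desAux (a :: (x :: t') ++ [0])
        = (if x < a then 1 else 0) + desAux (x :: (t' ++ [0])) := rfl
    have e3 : ((x :: t') ++ [0]).getD (j+1) 0 = (t' ++ [0]).getD j 0 := rfl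
    have e4 : (a :: x :: t').getD (j+1) 0 = (x :: t').getD j 0 := rfl
    simp only [List.cons_append] at e1 e2 ⊢
    rw [e1, e2]
    simp only [List.getD_cons_succ]
    split_ifs at ih ⊢ <;> omega

lemma des_insertIdx (w : List ℕ) (j L : ℕ) (hj : j ≤ w.length) (hL : ∀ x ∈ w, x ≤ L) :
    des (w.insertIdx j L) + (if gapB w j then 1 else 0)
      = des w + (if (w ++ [0]).getD j 0 < L then 1 else 0) := by
  have h := desAux_insertIdx j w 0 L hj (Nat.zero_le L) hL
  have hg : (if gapB w j then 1 else 0)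
      = (if (w ++ [0]).getD j 0 < (0 :: w).getD j 0 then (1:ℕ) else 0) := by
    simp [gapB]
  rw [des, des, hg]
  exact h

lemma getD_lt_of_forall_lt (w : List ℕ) (j L : ℕ) (hL : ∀ x ∈ w, x < L) (hL0 : 0 < L) :
    (w ++ [0]).getD j 0 < L := by
  rcases lt_or_ge j (w ++ [0]).length with h | h
  · rw [List.getD_eq_getElem _ _ h]
    have hm : (w ++ [0])[j] ∈ w ++ [0] := List.getElem_mem h
    rcases List.mem_append.1 hm with h1 | h1
    · exact hL _ h1
    · simp at h1; omega
  · rw [List.getD_eq_default _ _ h]; exact hL0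

lemma des_insertIdx_of_lt (w : List ℕ) (j L : ℕ) (hj : j ≤ w.length)
    (hL : ∀ x ∈ w, x < L) (hL0 : 0 < L) :
    des (w.insertIdx j L) + (if gapB w j then 1 else 0) = des w + 1 := by
  have h := des_insertIdx w j L hj (fun x hx => (hL x hx).le)
  rw [if_pos (getD_lt_of_forall_lt w j L hL hL0)] at h
  exact h


/-! ### insertIdx lemmas -/

lemma insertIdx_length_append (l1 l2 : List ℕ) (a : ℕ) :
    (l1 ++ l2).insertIdx l1.length a = l1 ++ a :: l2 := by
  induction l1 with
  | nil => rfl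
  | cons x t ih => simpa using ih

lemma erase_insertIdx_of_not_mem : ∀ (j : ℕ) (w : List ℕ) (L : ℕ), j ≤ w.length → L ∉ w →
    (w.insertIdx j L).erase L = w
  | 0, w, L, _, _ => by simp
  | (j+1), [], L, hj, _ => by simp at hj
  | (j+1), x :: t, L, hj, hL => by
    have hx : x ≠ L := fun h => hL (h ▸ (List.mem_cons_self (a := x) (l := t)))
    simp only [List.insertIdx_succ_cons]
    rw [List.erase_cons_tail (by simpa using hx)]
    rw [erase_insertIdx_of_not_mem j t L (by simpa using hj) (fun h => hL (List.mem_cons_of_mem _ h))]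

lemma insertIdx_inj_idx {w : List ℕ} {L j j' : ℕ} (hL : L ∉ w) (hj : j ≤ w.length)
    (hj' : j' ≤ w.length) (h : w.insertIdx j L = w.insertIdx j' L) : j = j' := by
  by_contra hne
  wlog hlt : j < j' generalizing j j'
  · exact this hj' hj h.symm (Ne.symm hne) (by omega)
  have h1 : (w.insertIdx j L)[j]'(by rw [List.length_insertIdx_of_le_length hj _]; omega) = L :=
    List.getElem_insertIdx_self _
  have h2 : (w.insertIdx j' L)[j]'(by rw [List.length_insertIdx_of_le_length hj' _]; omega) = w[j]'(by omega) :=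
    List.getElem_insertIdx_of_lt hlt _
  have h1' : (w.insertIdx j' L)[j]'(by rw [List.length_insertIdx_of_le_length hj' _]; omega) = L :=
    (List.getElem_of_eq h.symm _).trans h1
  have : w[j]'(by omega) = L := h2.symm.trans h1'
  exact hL (this ▸ List.getElem_mem _)

lemma double_insertIdx_inj {w w' : List ℕ} {L j k j' k' : ℕ}
    (hw : L ∉ w) (hw' : L ∉ w')
    (hk : k ≤ j) (hj : j ≤ w.length) (hk' : k' ≤ j') (hj' : j' ≤ w'.length)
    (h : (w.insertIdx j L).insertIdx k L = (w'.insertIdx j' L).insertIdx k' L) :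
    k = k' ∧ j = j' ∧ w = w' := by
  have hlen : (w.insertIdx j L).length = w.length + 1 := List.length_insertIdx_of_le_length hj _
  have hlen' : (w'.insertIdx j' L).length = w'.length + 1 := List.length_insertIdx_of_le_length hj' _
  have hkk : k = k' := by
    by_contra hne
    wlog hlt : k < k' generalizing w w' j k j' k'
    · exact this hw' hw hk' hj' hk hj h.symm hlen' hlen (Ne.symm hne) (by omega)
    have h1 : ((w.insertIdx j L).insertIdx k L)[k]'(by
        rw [List.length_insertIdx_of_le_length (by omega : k ≤ (w.insertIdx j L).length) _]; omega) = L :=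
      List.getElem_insertIdx_self _
    have h2 : ((w'.insertIdx j' L).insertIdx k' L)[k]'(by
        rw [List.length_insertIdx_of_le_length (by omega : k' ≤ (w'.insertIdx j' L).length) _]; omega)
        = (w'.insertIdx j' L)[k]'(by omega) :=
      List.getElem_insertIdx_of_lt hlt _
    have h3 : (w'.insertIdx j' L)[k]'(by omega) = w'[k]'(by omega) :=
      List.getElem_insertIdx_of_lt (by omega) _
    have h1' : ((w'.insertIdx j' L).insertIdx k' L)[k]'(by
        rw [List.length_insertIdx_of_le_length (by omega : k' ≤ (w'.insertIdx j' L).length) _]; omega) = L :=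
      (List.getElem_of_eq h.symm _).trans h1
    have : w'[k]'(by omega) = L := h3.symm.trans (h2.symm.trans h1')
    exact hw' (this ▸ List.getElem_mem _)
  subst hkk
  have h4 : w.insertIdx j L = w'.insertIdx j' L := by
    have := congrArg (fun l => List.eraseIdx l k) h
    simpa [List.eraseIdx_insertIdx_self] using this
  have hjj : j = j' := by
    by_contra hne
    have hmem : L ∈ w'.insertIdx j' L := by
      rw [List.mem_insertIdx hj']; left; rfl
    have e1 : (w.insertIdx j L).erase L = w := erase_insertIdx_of_not_mem j w L hj hw
    have e2 : (w'.insertIdx j' L).erase L = w' := erase_insertIdx_of_not_mem j' w' L hj' hw'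
    rw [h4, e2] at e1
    subst e1
    exact hne (insertIdx_inj_idx hw hj hj' h4)
  subst hjj
  exact ⟨rfl, rfl, List.insertIdx_injective j L h4⟩

/-! ### arrangements -/

lemma mem_arrangements {v : List ℕ} {M : Multiset ℕ} :
    v ∈ arrangements M ↔ (v : Multiset ℕ) = M := by
  rw [arrangements, List.mem_dedup, List.mem_permutations, ← Multiset.coe_toList M,
    Multiset.coe_eq_coe, Multiset.coe_toList]

lemma nodup_arrangements (M : Multiset ℕ) : (arrangements M).Nodup := List.nodup_dedup _

lemma length_of_mem_arrangements {v : List ℕ} {M : Multiset ℕ} (h : v ∈ arrangements M) :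
    v.length = Multiset.card M := by
  rw [mem_arrangements] at h
  rw [← h, Multiset.coe_card]

lemma coe_insertIdx (w : List ℕ) (j L : ℕ) (hj : j ≤ w.length) :
    ((w.insertIdx j L : List ℕ) : Multiset ℕ) = L ::ₘ (w : Multiset ℕ) := by
  rw [Multiset.cons_coe, Multiset.coe_eq_coe]
  exact List.perm_insertIdx L w hj

def gapsT (L : ℕ) (w : List ℕ) : List (List ℕ) :=
  (List.range (w.length + 1)).map (fun j => w.insertIdx j L)

def gapsG (L : ℕ) (w : List ℕ) : List (List ℕ) :=
  (List.range (w.length + 1)).flatMap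
    (fun j => (List.range (j + 1)).map (fun k => (w.insertIdx j L).insertIdx k L))

lemma arr_perm_single (L : ℕ) (M : Multiset ℕ) (hL : L ∉ M) :
    (arrangements (L ::ₘ M)).Perm ((arrangements M).flatMap (fun w => gapsT L w)) := by
  have hnotmem : ∀ w : List ℕ, (w : Multiset ℕ) = M → L ∉ w := by
    intro w hw hmem
    exact hL (by rw [← hw]; exact hmem)
  apply (List.perm_ext_iff_of_nodup (nodup_arrangements _) ?_).2
  · intro v
    rw [mem_arrangements]
    simp only [List.mem_flatMap, gapsT, List.mem_map, List.mem_range]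
    constructor
    · intro hv
      have hLv : L ∈ v := by
        rw [← Multiset.mem_coe, hv]; exact Multiset.mem_cons_self _ _
      obtain ⟨l1, l2, rfl⟩ := List.append_of_mem hLv
      have hperm : (l1 ++ L :: l2 : Multiset ℕ) = L ::ₘ ((l1 ++ l2 : List ℕ) : Multiset ℕ) := by
        rw [Multiset.cons_coe, Multiset.coe_eq_coe]
        exact List.perm_middle
      rw [hperm] at hv
      have hM : ((l1 ++ l2 : List ℕ) : Multiset ℕ) = M := (Multiset.cons_inj_right L).1 hv
      refine ⟨l1 ++ l2, mem_arrangements.2 hM, l1.length,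
        by simp only [List.length_append]; omega, ?_⟩
      exact insertIdx_length_append l1 l2 L
    · rintro ⟨w, hw, j, hj, rfl⟩
      rw [mem_arrangements] at hw
      rw [coe_insertIdx w j L (by omega), hw]
  · rw [List.nodup_flatMap]
    constructor
    · intro w hw
      have hLw := hnotmem w (mem_arrangements.1 hw)
      apply List.Nodup.map_on ?_ List.nodup_range
      intro j hj j' hj' hinj
      simp only [List.mem_range] at hj hj'
      exact insertIdx_inj_idx hLw (by omega) (by omega) hinj
    · apply List.Pairwise.imp_of_mem ?_ (nodup_arrangements M)
      intro w w' hw hw' hne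
      intro S hS hS'
      simp only [gapsT, List.mem_map, List.mem_range] at hS hS'
      obtain ⟨j, hj, rfl⟩ := hS
      obtain ⟨j', hj', hSS⟩ := hS'
      have hLw := hnotmem w (mem_arrangements.1 hw)
      have hLw' := hnotmem w' (mem_arrangements.1 hw')
      have e1 : (w.insertIdx j L).erase L = w := erase_insertIdx_of_not_mem j w L (by omega) hLw
      have e2 : (w'.insertIdx j' L).erase L = w' := erase_insertIdx_of_not_mem j' w' L (by omega) hLw'
      rw [hSS, e1] at e2
      exact hne e2

lemma arr_perm_double (L : ℕ) (M : Multiset ℕ) (hL : L ∉ M) :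
    (arrangements (L ::ₘ L ::ₘ M)).Perm ((arrangements M).flatMap (fun w => gapsG L w)) := by
  have hnotmem : ∀ w : List ℕ, (w : Multiset ℕ) = M → L ∉ w := by
    intro w hw hmem
    exact hL (by rw [← hw]; exact hmem)
  apply (List.perm_ext_iff_of_nodup (nodup_arrangements _) ?_).2
  · intro v
    rw [mem_arrangements]
    simp only [List.mem_flatMap, gapsG, List.mem_map, List.mem_range]
    constructor
    · intro hv
      have horig := hv
      have hLv : L ∈ v := by
        rw [← Multiset.mem_coe, hv]; exact Multiset.mem_cons_self _ _
      obtain ⟨l1, l2, rfl⟩ := List.append_of_mem hLv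
      have hperm1 : (l1 ++ L :: l2 : Multiset ℕ) = L ::ₘ ((l1 ++ l2 : List ℕ) : Multiset ℕ) := by
        rw [Multiset.cons_coe, Multiset.coe_eq_coe]; exact List.perm_middle
      rw [hperm1] at hv
      have hv2 : ((l1 ++ l2 : List ℕ) : Multiset ℕ) = L ::ₘ M := (Multiset.cons_inj_right L).1 hv
      have hL12 : L ∈ l1 ++ l2 := by
        rw [← Multiset.mem_coe, hv2]; exact Multiset.mem_cons_self _ _
      obtain ⟨p, q, rl, hshape⟩ :
          ∃ p q rl : List ℕ, l1 ++ L :: l2 = p ++ L :: (q ++ L :: rl) := by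
        rcases List.mem_append.1 hL12 with h1 | h2
        · obtain ⟨p, q, hpq⟩ := List.append_of_mem h1
          exact ⟨p, q, l2, by rw [hpq]; simp⟩
        · obtain ⟨q, rl, hqr⟩ := List.append_of_mem h2
          exact ⟨l1, q, rl, by rw [hqr]⟩
      have hv3 : ((p ++ L :: (q ++ L :: rl) : List ℕ) : Multiset ℕ) = L ::ₘ L ::ₘ M := by
        rw [← hshape]; exact horig
      rw [hshape]
      set w : List ℕ := p ++ (q ++ rl) with hwdef
      have hpw : ((p ++ L :: (q ++ L :: rl) : List ℕ) : Multiset ℕ)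
          = L ::ₘ L ::ₘ (w : Multiset ℕ) := by
        rw [Multiset.cons_coe, Multiset.cons_coe, Multiset.coe_eq_coe]
        refine List.Perm.trans List.perm_middle (List.Perm.cons L ?_)
        have h2 : ((p ++ q) ++ L :: rl).Perm (L :: ((p ++ q) ++ rl)) := List.perm_middle
        simpa [List.append_assoc] using h2
      rw [hpw] at hv3
      have hM : (w : Multiset ℕ) = M := by
        have := (Multiset.cons_inj_right L).1 hv3
        exact (Multiset.cons_inj_right L).1 this
      refine ⟨w, mem_arrangements.2 hM, p.length + q.length, ?_, p.length, by omega, ?_⟩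
      · have : w.length = p.length + q.length + rl.length := by simp [hwdef]; omega
        omega
      · have e1 : w.insertIdx (p.length + q.length) L = p ++ (q ++ L :: rl) := by
          have : w = (p ++ q) ++ rl := by simp [hwdef]
          rw [this]
          have := insertIdx_length_append (p ++ q) rl L
          simpa using this
        rw [e1]
        exact insertIdx_length_append p (q ++ L :: rl) L
    · rintro ⟨w, hw, j, hj, k, hk, rfl⟩
      rw [mem_arrangements] at hw
      have h1 : ((w.insertIdx j L : List ℕ) : Multiset ℕ) = L ::ₘ (w : Multiset ℕ) :=
        coe_insertIdx w j L (by omega)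
      have hlen : (w.insertIdx j L).length = w.length + 1 :=
        List.length_insertIdx_of_le_length (by omega) _
      rw [coe_insertIdx _ k L (by omega), h1, hw, Multiset.cons_swap]
  · rw [List.nodup_flatMap]
    constructor
    · intro w hw
      have hLw := hnotmem w (mem_arrangements.1 hw)
      rw [gapsG, List.nodup_flatMap]
      constructor
      · intro j hj
        simp only [List.mem_range] at hj
        apply List.Nodup.map_on ?_ List.nodup_range
        intro k hk k' hk' hinj
        simp only [List.mem_range] at hk hk'
        exact (double_insertIdx_inj hLw hLw (by omega) (by omega) (by omega) (by omega) hinj).1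
      · apply List.Pairwise.imp_of_mem ?_ List.nodup_range
        intro j j' hj hj' hne S hS hS'
        simp only [List.mem_range] at hj hj'
        simp only [List.mem_map, List.mem_range] at hS hS'
        obtain ⟨k, hk, rfl⟩ := hS
        obtain ⟨k', hk', hSS⟩ := hS'
        exact hne (double_insertIdx_inj hLw hLw (by omega) (by omega) (by omega) (by omega)
          hSS.symm).2.1
    · apply List.Pairwise.imp_of_mem ?_ (nodup_arrangements M)
      intro w w' hw hw' hne S hS hS'
      simp only [gapsG, List.mem_flatMap, List.mem_map, List.mem_range] at hS hS'
      obtain ⟨j, hj, k, hk, rfl⟩ := hS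
      obtain ⟨j', hj', k', hk', hSS⟩ := hS'
      have hLw := hnotmem w (mem_arrangements.1 hw)
      have hLw' := hnotmem w' (mem_arrangements.1 hw')
      exact hne (double_insertIdx_inj hLw hLw' (by omega) (by omega) (by omega) (by omega)
        hSS.symm).2.2

/-! ### operator lemmas -/

lemma pderiv_comm' (i j : Fin 2) (f : MvPolynomial (Fin 2) ℚ) :
    pderiv i (pderiv j f) = pderiv j (pderiv i f) := by
  induction f using MvPolynomial.induction_on with
  | C a => simp
  | add p q hp hq => simp [hp, hq]
  | mul_X p n hp =>
    by_cases hni : n = i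
    · subst hni
      by_cases hnj : n = j
      · subst hnj; simp [pderiv_mul, hp]
      · simp [pderiv_mul, hp, pderiv_X_self, pderiv_X_of_ne hnj,
          pderiv_X_of_ne (Ne.symm hnj)]
        ring
    · by_cases hnj : n = j
      · subst hnj
        simp [pderiv_mul, hp, pderiv_X_self, pderiv_X_of_ne hni,
          pderiv_X_of_ne (Ne.symm hni)]
        ring
      · simp [pderiv_mul, hp, pderiv_X_of_ne hni, pderiv_X_of_ne hnj]

lemma Teul_add (f g : MvPolynomial (Fin 2) ℚ) : Teul (f + g) = Teul f + Teul g := by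
  simp [Teul]; ring

lemma Gop_add (f g : MvPolynomial (Fin 2) ℚ) : Gop (f + g) = Gop f + Gop g := by
  simp [Gop]; ring

lemma Teul_sum (l : List (MvPolynomial (Fin 2) ℚ)) : Teul l.sum = (l.map Teul).sum := by
  induction l with
  | nil => simp [Teul]
  | cons a t ih => simp [Teul_add, ih]

lemma Gop_sum (l : List (MvPolynomial (Fin 2) ℚ)) : Gop l.sum = (l.map Gop).sum := by
  induction l with
  | nil => simp [Gop]
  | cons a t ih => simp [Gop_add, ih]

lemma two_C_half : (2 : MvPolynomial (Fin 2) ℚ) * C (1/2 : ℚ) = 1 := by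
  rw [show (2 : MvPolynomial (Fin 2) ℚ) = C (2:ℚ) from (map_ofNat C 2).symm, ← C_mul]
  norm_num

lemma Teul_Gop_comm (f : MvPolynomial (Fin 2) ℚ) : Teul (Gop f) = Gop (Teul f) := by
  simp only [Teul, Gop, pderiv_mul, map_add, pderiv_C, pderiv_pow, pderiv_X_self,
    pderiv_X_of_ne (show (0:Fin 2) ≠ 1 by decide), pderiv_X_of_ne (show (1:Fin 2) ≠ 0 by decide),
    pderiv_one, map_zero, mul_zero, zero_mul, add_zero, zero_add, mul_one, one_mul,
    pderiv_comm' (1 : Fin 2) (0 : Fin 2)]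
  linear_combination (X 0 ^ 2 * X 1 ^ 3 *
      (pderiv (1 : Fin 2) (pderiv (1 : Fin 2) f) - pderiv (0 : Fin 2) (pderiv (1 : Fin 2) f))
    + X 0 ^ 3 * X 1 ^ 2 *
      (pderiv (0 : Fin 2) (pderiv (0 : Fin 2) f) - pderiv (0 : Fin 2) (pderiv (1 : Fin 2) f)))
    * two_C_half

lemma two_Gop (f : MvPolynomial (Fin 2) ℚ) :
    (2 : MvPolynomial (Fin 2) ℚ) * Gop f =
      2 * (X 0 * X 1 ^ 2 * (pderiv (0 : Fin 2) f + pderiv (1 : Fin 2) f))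
      + (X 0 ^ 2 * X 1 ^ 2) *
          (pderiv (0 : Fin 2) (pderiv (0 : Fin 2) f) + pderiv (1 : Fin 2) (pderiv (1 : Fin 2) f))
      + 2 * (X 0 ^ 2 * X 1 ^ 2 * pderiv (0 : Fin 2) (pderiv (1 : Fin 2) f)) := by
  rw [Gop]
  linear_combination ((X 0 ^ 2 * X 1 ^ 2) *
    (pderiv (0 : Fin 2) (pderiv (0 : Fin 2) f) + pderiv (1 : Fin 2) (pderiv (1 : Fin 2) f)))
      * two_C_half

lemma Teul_mono (d e : ℕ) : Teul (X 0 ^ d * X 1 ^ e : MvPolynomial (Fin 2) ℚ) =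
    (d : MvPolynomial (Fin 2) ℚ) * (X 0 ^ d * X 1 ^ (e+1))
      + (e : MvPolynomial (Fin 2) ℚ) * (X 0 ^ (d+1) * X 1 ^ e) := by
  rcases d with _ | d <;> rcases e with _ | e <;>
    simp [Teul, pderiv_mul, pderiv_pow, pderiv_X_self,
      pderiv_X_of_ne (show (0:Fin 2) ≠ 1 by decide),
      pderiv_X_of_ne (show (1:Fin 2) ≠ 0 by decide)] <;>
    push_cast <;> ring

lemma two_Gop_mono (d e : ℕ) :
    (2 : MvPolynomial (Fin 2) ℚ) * Gop (X 0 ^ d * X 1 ^ e : MvPolynomial (Fin 2) ℚ) =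
    ((d * (d+1) : ℕ) : MvPolynomial (Fin 2) ℚ) * (X 0 ^ d * X 1 ^ (e+2))
      + 2 * (((d+1) * e : ℕ) : MvPolynomial (Fin 2) ℚ) * (X 0 ^ (d+1) * X 1 ^ (e+1))
      + ((e * (e-1) : ℕ) : MvPolynomial (Fin 2) ℚ) * (X 0 ^ (d+2) * X 1 ^ e) := by
  rw [two_Gop]
  rcases d with _ | _ | d <;> rcases e with _ | _ | e <;>
    simp [pderiv_mul, pderiv_pow, pderiv_X_self,
      pderiv_X_of_ne (show (0:Fin 2) ≠ 1 by decide),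
      pderiv_X_of_ne (show (1:Fin 2) ≠ 0 by decide)] <;>
    push_cast <;> ring

/-! ### summation helpers -/

lemma list_range_sum (n : ℕ) (f : ℕ → MvPolynomial (Fin 2) ℚ) :
    ((List.range n).map f).sum = ∑ j ∈ Finset.range n, f j := rfl

lemma length_filter_eq_sum (l : List ℕ) (p : ℕ → Bool) :
    (l.filter p).length = (l.map (fun j => if p j then 1 else 0)).sum := by
  induction l with
  | nil => rfl
  | cons a t ih => by_cases h : p a <;> simp [List.filter_cons, h, ih, Nat.add_comm]

lemma card_gap_filter (w : List ℕ) :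
    ((Finset.range (w.length + 1)).filter (fun j => gapB w j = true)).card = des w := by
  rw [des_eq_filter, Finset.card_filter, length_filter_eq_sum]
  have : ((List.range (w.length+1)).map (fun j => if gapB w j then 1 else 0)).sum
      = ∑ j ∈ Finset.range (w.length+1), (if gapB w j = true then 1 else 0) := rfl
  rw [this]

lemma card_gap_filter_not (w : List ℕ) :
    ((Finset.range (w.length + 1)).filter (fun j => ¬ gapB w j = true)).card
      = w.length + 1 - des w := by
  have h := Finset.card_filter_add_card_filter_not
    (s := Finset.range (w.length + 1)) (p := fun j => gapB w j = true)
  rw [card_gap_filter] at h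
  simp only [Finset.card_range] at h
  omega

lemma tri_sum {M : Type*} [AddCommMonoid M] (f : ℕ → ℕ → M) (hf : ∀ j k, f j k = f k j)
    (n : ℕ) :
    (∑ j ∈ Finset.range n, ∑ k ∈ Finset.range j, f j k)
      + (∑ j ∈ Finset.range n, ∑ k ∈ Finset.range j, f j k)
      + ∑ j ∈ Finset.range n, f j j
      = ∑ j ∈ Finset.range n, ∑ k ∈ Finset.range n, f j k := by
  induction n with
  | zero => simp
  | succ n ih =>
    have h1 : ∑ j ∈ Finset.range n, (∑ k ∈ Finset.range n, f j k + f j n)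
        = (∑ j ∈ Finset.range n, ∑ k ∈ Finset.range n, f j k)
          + ∑ k ∈ Finset.range n, f n k := by
      rw [Finset.sum_add_distrib]
      congr 1
      exact Finset.sum_congr rfl (fun j _ => hf j n)
    simp only [Finset.sum_range_succ]
    rw [h1, ← ih]
    abel

/-! ### the per-word sums -/

lemma sum_gapsT (w : List ℕ) (L : ℕ) (hL : ∀ x ∈ w, x < L) (hL0 : 0 < L) :
    ((gapsT L w).map
        (fun v => (X 0 ^ des v * X 1 ^ (w.length + 2 - des v) : MvPolynomial (Fin 2) ℚ))).sum
      = Teul (X 0 ^ des w * X 1 ^ (w.length + 1 - des w)) := by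
  have hd : des w ≤ w.length := des_le w
  rw [gapsT, List.map_map, list_range_sum]
  have hvdes : ∀ j ∈ Finset.range (w.length + 1),
      ((fun v => (X 0 ^ des v * X 1 ^ (w.length + 2 - des v) : MvPolynomial (Fin 2) ℚ)) ∘
          fun j => w.insertIdx j L) j
        = if gapB w j then X 0 ^ des w * X 1 ^ (w.length + 2 - des w)
          else X 0 ^ (des w + 1) * X 1 ^ (w.length + 1 - des w) := by
    intro j hj
    simp only [Finset.mem_range] at hj
    have h := des_insertIdx_of_lt w j L (by omega) hL hL0
    by_cases hg : gapB w j
    · rw [if_pos hg] at h ⊢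
      have hdes : des (w.insertIdx j L) = des w := by omega
      simp only [Function.comp_apply, hdes]
    · rw [if_neg hg] at h ⊢
      have hdes : des (w.insertIdx j L) = des w + 1 := by omega
      have hexp : w.length + 2 - (des w + 1) = w.length + 1 - des w := by omega
      simp only [Function.comp_apply, hdes, hexp]
  rw [Finset.sum_congr rfl hvdes, Finset.sum_ite, Finset.sum_const, Finset.sum_const,
    card_gap_filter, card_gap_filter_not]
  rw [Teul_mono]
  have hexp2 : w.length + 1 - des w + 1 = w.length + 2 - des w := by omega
  rw [hexp2]
  rw [nsmul_eq_mul, nsmul_eq_mul]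

-- des facts for double insertion
lemma des_double_diag (w : List ℕ) (j L : ℕ) (hj : j ≤ w.length)
    (hL : ∀ x ∈ w, x < L) (hL0 : 0 < L) :
    des ((w.insertIdx j L).insertIdx j L) = des (w.insertIdx j L) := by
  set w1 := w.insertIdx j L with hw1
  have hlen : w1.length = w.length + 1 := List.length_insertIdx_of_le_length hj _
  have hle : ∀ x ∈ w1, x ≤ L := by
    intro x hx
    rcases (List.mem_insertIdx hj).1 hx with h | h
    · omega
    · exact (hL x h).le
  have h := des_insertIdx w1 j L (by omega) hle
  have hgetj : (w1 ++ [0]).getD j 0 = L := by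
    rw [List.getD_append _ _ _ _ (by omega), List.getD_eq_getElem _ _ (by omega)]
    simp only [hw1]
    exact List.getElem_insertIdx_self _
  have hgap : gapB w1 j = false := by
    simp only [gapB, hgetj, decide_eq_false_iff_not, not_lt]
    cases j with
    | zero => simp
    | succ i =>
      simp only [List.getD_cons_succ]
      rcases lt_or_ge i w1.length with hi | hi
      · rw [List.getD_eq_getElem _ _ hi]
        have : w1[i] = w[i]'(by omega) :=
          List.getElem_insertIdx_of_lt (by omega) _
        rw [this]
        exact (hL _ (List.getElem_mem _)).le
      · rw [List.getD_eq_default _ _ hi]; omega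
  rw [hgap, hgetj] at h
  simp only [lt_irrefl, if_false, Bool.false_eq_true] at h
  simpa using h

lemma des_double_lt (w : List ℕ) (j k L : ℕ) (hk : k < j) (hj : j ≤ w.length)
    (hL : ∀ x ∈ w, x < L) (hL0 : 0 < L) :
    des ((w.insertIdx j L).insertIdx k L) + (if gapB w k then 1 else 0)
      = des (w.insertIdx j L) + 1 := by
  set w1 := w.insertIdx j L with hw1
  have hlen : w1.length = w.length + 1 := List.length_insertIdx_of_le_length hj _
  have hle : ∀ x ∈ w1, x ≤ L := by
    intro x hx
    rcases (List.mem_insertIdx hj).1 hx with h | h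
    · omega
    · exact (hL x h).le
  have h := des_insertIdx w1 k L (by omega) hle
  have hwk : w1.getD k 0 = w.getD k 0 := by
    rcases lt_or_ge k w.length with hkw | hkw
    · rw [List.getD_eq_getElem _ _ (by omega), List.getD_eq_getElem _ _ hkw]
      exact List.getElem_insertIdx_of_lt hk _
    · omega
  have hget : (w1 ++ [0]).getD k 0 = (w ++ [0]).getD k 0 := by
    rw [List.getD_append _ _ _ _ (by omega), List.getD_append _ _ _ _ (by omega), hwk]
  have hzget : (0 :: w1).getD k 0 = (0 :: w).getD k 0 := by
    cases k with
    | zero => rfl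
    | succ i =>
      simp only [List.getD_cons_succ]
      rw [List.getD_eq_getElem _ _ (show i < w1.length by omega),
        List.getD_eq_getElem _ _ (show i < w.length by omega)]
      exact List.getElem_insertIdx_of_lt (by omega) _
  have hgap : gapB w1 k = gapB w k := by
    simp only [gapB, hget, hzget]
  rw [hgap] at h
  have hlt : (w1 ++ [0]).getD k 0 < L := by
    rw [hget]
    exact getD_lt_of_forall_lt w k L hL hL0
  rw [if_pos hlt] at h
  exact h

noncomputable def uX (w : List ℕ) (j : ℕ) : MvPolynomial (Fin 2) ℚ :=
  if gapB w j then X 1 else X 0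

lemma sum_flatMap {α : Type*} (l : List α) (g : α → List (MvPolynomial (Fin 2) ℚ)) :
    (l.flatMap g).sum = (l.map (fun a => (g a).sum)).sum := by
  induction l with
  | nil => rfl
  | cons a t ih => simp [ih]

lemma sum_uX (w : List ℕ) :
    ∑ j ∈ Finset.range (w.length + 1), uX w j
      = ((des w : ℕ) : MvPolynomial (Fin 2) ℚ) * X 1
        + ((w.length + 1 - des w : ℕ) : MvPolynomial (Fin 2) ℚ) * X 0 := by
  simp only [uX]
  rw [Finset.sum_ite, Finset.sum_const, Finset.sum_const, card_gap_filter,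
    card_gap_filter_not, nsmul_eq_mul, nsmul_eq_mul]

lemma sum_uX_sq (w : List ℕ) :
    ∑ j ∈ Finset.range (w.length + 1), uX w j * uX w j
      = ((des w : ℕ) : MvPolynomial (Fin 2) ℚ) * (X 1 * X 1)
        + ((w.length + 1 - des w : ℕ) : MvPolynomial (Fin 2) ℚ) * (X 0 * X 0) := by
  have : ∀ j ∈ Finset.range (w.length + 1),
      uX w j * uX w j = if gapB w j then X 1 * X 1 else X 0 * X 0 := by
    intro j _
    by_cases hg : gapB w j <;> simp [uX, hg]
  rw [Finset.sum_congr rfl this, Finset.sum_ite, Finset.sum_const, Finset.sum_const,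
    card_gap_filter, card_gap_filter_not, nsmul_eq_mul, nsmul_eq_mul]

lemma sum_gapsG (w : List ℕ) (L : ℕ) (hL : ∀ x ∈ w, x < L) (hL0 : 0 < L) :
    ((gapsG L w).map
        (fun v => (X 0 ^ des v * X 1 ^ (w.length + 3 - des v) : MvPolynomial (Fin 2) ℚ))).sum
      = Gop (X 0 ^ des w * X 1 ^ (w.length + 1 - des w)) := by
  have hd : des w ≤ w.length := des_le w
  set e := w.length + 1 - des w with he_def
  have he : des w + e = w.length + 1 := by omega
  have he1 : 1 ≤ e := by omega
  set B : MvPolynomial (Fin 2) ℚ := X 0 ^ des w * X 1 ^ e with hB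
  -- rewrite the list sum as nested Finset sums
  rw [gapsG, List.map_flatMap, sum_flatMap, list_range_sum]
  have hinner : ∀ j ∈ Finset.range (w.length + 1),
      ((((List.range (j+1)).map (fun k => (w.insertIdx j L).insertIdx k L)).map
          (fun v => (X 0 ^ des v * X 1 ^ (w.length + 3 - des v) : MvPolynomial (Fin 2) ℚ))).sum)
        = (∑ k ∈ Finset.range j, B * (uX w k * uX w j)) + B * X 1 * uX w j := by
    intro j hj
    simp only [Finset.mem_range] at hj
    have hj' : j ≤ w.length := by omega
    have h1 : des (w.insertIdx j L) + (if gapB w j then 1 else 0) = des w + 1 :=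
      des_insertIdx_of_lt w j L hj' hL hL0
    rw [List.map_map, list_range_sum, Finset.sum_range_succ]
    congr 1
    · apply Finset.sum_congr rfl
      intro k hk
      simp only [Finset.mem_range] at hk
      have h2 := des_double_lt w j k L hk hj' hL hL0
      simp only [Function.comp_apply]
      by_cases hgj : gapB w j <;> by_cases hgk : gapB w k
      · rw [if_pos hgj] at h1; rw [if_pos hgk] at h2
        have hv : des ((w.insertIdx j L).insertIdx k L) = des w := by omega
        rw [hv, show w.length + 3 - des w = e + 2 by omega]
        simp only [uX, if_pos hgj, if_pos hgk, hB]; ring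
      · rw [if_pos hgj] at h1; rw [if_neg hgk] at h2
        have hv : des ((w.insertIdx j L).insertIdx k L) = des w + 1 := by omega
        rw [hv, show w.length + 3 - (des w + 1) = e + 1 by omega]
        simp only [uX, if_pos hgj, if_neg hgk, hB]; ring
      · rw [if_neg hgj] at h1; rw [if_pos hgk] at h2
        have hv : des ((w.insertIdx j L).insertIdx k L) = des w + 1 := by omega
        rw [hv, show w.length + 3 - (des w + 1) = e + 1 by omega]
        simp only [uX, if_neg hgj, if_pos hgk, hB]; ring
      · rw [if_neg hgj] at h1; rw [if_neg hgk] at h2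
        have hv : des ((w.insertIdx j L).insertIdx k L) = des w + 2 := by omega
        rw [hv, show w.length + 3 - (des w + 2) = e by omega]
        simp only [uX, if_neg hgj, if_neg hgk, hB]; ring
    · simp only [Function.comp_apply]
      have h3 : des ((w.insertIdx j L).insertIdx j L) = des (w.insertIdx j L) :=
        des_double_diag w j L hj' hL hL0
      by_cases hgj : gapB w j
      · rw [if_pos hgj] at h1
        rw [h3, show des (w.insertIdx j L) = des w by omega,
          show w.length + 3 - des w = e + 2 by omega]
        simp only [uX, if_pos hgj, hB]; ring
      · rw [if_neg hgj] at h1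
        rw [h3, show des (w.insertIdx j L) = des w + 1 by omega,
          show w.length + 3 - (des w + 1) = e + 1 by omega]
        simp only [uX, if_neg hgj, hB]; ring
  rw [Finset.sum_congr rfl hinner, Finset.sum_add_distrib]
  -- now pure algebra
  set S : MvPolynomial (Fin 2) ℚ := ∑ j ∈ Finset.range (w.length + 1), uX w j with hSdef
  have hdiagsum : ∑ j ∈ Finset.range (w.length + 1), B * X 1 * uX w j = B * X 1 * S := by
    rw [hSdef, Finset.mul_sum]
  have htri := tri_sum (fun j k => B * (uX w k * uX w j)) (fun j k => by ring) (w.length + 1)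
  have hfull : ∑ j ∈ Finset.range (w.length + 1), ∑ k ∈ Finset.range (w.length + 1),
      B * (uX w k * uX w j) = B * (S * S) := by
    have hin : ∀ j ∈ Finset.range (w.length + 1),
        ∑ k ∈ Finset.range (w.length + 1), B * (uX w k * uX w j) = B * (S * uX w j) := by
      intro j _
      rw [← Finset.mul_sum, ← Finset.sum_mul]
    rw [Finset.sum_congr rfl hin, ← Finset.mul_sum, ← Finset.mul_sum]
  have hdiag2 : ∑ j ∈ Finset.range (w.length + 1), B * (uX w j * uX w j)
      = B * (∑ j ∈ Finset.range (w.length + 1), uX w j * uX w j) := by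
    rw [Finset.mul_sum]
  rw [hfull, hdiag2] at htri
  rw [hdiagsum]
  -- cancel the factor 2
  have h2 : (2 : MvPolynomial (Fin 2) ℚ) ≠ 0 := by norm_num
  apply mul_left_cancel₀ h2
  rw [two_Gop_mono (des w) e]
  rw [hSdef, sum_uX, sum_uX_sq] at htri
  rw [hSdef, sum_uX]
  have hee : w.length + 1 - des w = e := rfl
  rw [hee] at htri ⊢
  push_cast [Nat.cast_sub he1] at htri ⊢
  linear_combination htri

/-! ### msetOf and Abi recursions -/

lemma flatMap_congr {α β : Type*} {l : List α} {f g : α → List β}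
    (h : ∀ a ∈ l, f a = g a) : l.flatMap f = l.flatMap g := by
  induction l with
  | nil => rfl
  | cons a t ih =>
    simp only [List.flatMap_cons]
    rw [h a (by simp), ih (fun a ha => h a (by simp [ha]))]

lemma msetOf_append (ms : List ℕ) (k : ℕ) :
    msetOf (ms ++ [k]) = Multiset.replicate k (ms.length + 1) + msetOf ms := by
  rw [msetOf, msetOf]
  have hlen : (ms ++ [k]).length = ms.length + 1 := by simp
  rw [hlen, List.range_succ, List.flatMap_append]
  have h1 : (List.range ms.length).flatMap
        (fun i => List.replicate ((ms ++ [k]).getD i 0) (i + 1))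
      = (List.range ms.length).flatMap (fun i => List.replicate (ms.getD i 0) (i + 1)) := by
    apply flatMap_congr
    intro i hi
    simp only [List.mem_range] at hi
    rw [List.getD_append _ _ _ _ hi]
  have h2 : ([ms.length] : List ℕ).flatMap
        (fun i => List.replicate ((ms ++ [k]).getD i 0) (i + 1))
      = List.replicate k (ms.length + 1) := by
    simp only [List.flatMap_cons, List.flatMap_nil, List.append_nil]
    congr 1
    rw [List.getD_eq_getElem _ _ (by simp)]
    simp
  rw [h1, h2, ← Multiset.coe_add, Multiset.coe_replicate]
  exact add_comm _ _

lemma mem_msetOf_le (ms : List ℕ) (x : ℕ) (h : x ∈ msetOf ms) : x ≤ ms.length := by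
  rw [msetOf, Multiset.mem_coe, List.mem_flatMap] at h
  obtain ⟨i, hi, hx⟩ := h
  simp only [List.mem_range] at hi
  have := List.eq_of_mem_replicate hx
  omega

lemma Abi_nil : Abi [] = X 1 := by
  have h0 : msetOf [] = 0 := rfl
  rw [Abi, h0, arrangements]
  rw [Multiset.toList_zero]
  simp [des, desAux]

lemma Abi_append_one (ms : List ℕ) : Abi (ms ++ [1]) = Teul (Abi ms) := by
  set M := msetOf ms with hM
  set L := ms.length + 1 with hLdef
  have hrep : msetOf (ms ++ [1]) = L ::ₘ M := by
    rw [msetOf_append]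
    simp [Multiset.replicate_one]
    rfl
  have hL : L ∉ M := fun h => by have := mem_msetOf_le ms _ h; omega
  have hperm := (arr_perm_single L M hL).map
    (fun w => (X 0 ^ des w * X 1 ^ (Multiset.card M + 1 + 1 - des w) : MvPolynomial (Fin 2) ℚ))
  rw [Abi, hrep]
  have hcard : Multiset.card (L ::ₘ M) = Multiset.card M + 1 := by simp
  rw [hcard, hperm.sum_eq, List.map_flatMap, sum_flatMap]
  have hptw : ∀ w ∈ arrangements M,
      (((gapsT L w).map
          (fun v => (X 0 ^ des v * X 1 ^ (Multiset.card M + 1 + 1 - des v) :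
            MvPolynomial (Fin 2) ℚ)))).sum
        = Teul (X 0 ^ des w * X 1 ^ (Multiset.card M + 1 - des w)) := by
    intro w hw
    have hlen : w.length = Multiset.card M := length_of_mem_arrangements hw
    have hx : ∀ x ∈ w, x < L := by
      intro x hxw
      have hxM : x ∈ M := by
        rw [← mem_arrangements.1 hw]
        exact Multiset.mem_coe.2 hxw
      have := mem_msetOf_le ms x (hM ▸ hxM)
      omega
    have h := sum_gapsT w L hx (by omega)
    rw [hlen] at h
    have e2 : Multiset.card M + 1 + 1 = Multiset.card M + 2 := rfl
    rw [e2]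
    exact h
  rw [List.map_congr_left hptw]
  rw [Abi, Teul_sum, List.map_map]
  rfl

lemma Abi_append_two (ms : List ℕ) : Abi (ms ++ [2]) = Gop (Abi ms) := by
  set M := msetOf ms with hM
  set L := ms.length + 1 with hLdef
  have hrep : msetOf (ms ++ [2]) = L ::ₘ L ::ₘ M := by
    rw [msetOf_append]
    rfl
  have hL : L ∉ M := fun h => by have := mem_msetOf_le ms _ h; omega
  have hperm := (arr_perm_double L M hL).map
    (fun w => (X 0 ^ des w * X 1 ^ (Multiset.card M + 2 + 1 - des w) : MvPolynomial (Fin 2) ℚ))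
  rw [Abi, hrep]
  have hcard : Multiset.card (L ::ₘ L ::ₘ M) = Multiset.card M + 2 := by simp
  rw [hcard, hperm.sum_eq, List.map_flatMap, sum_flatMap]
  have hptw : ∀ w ∈ arrangements M,
      (((gapsG L w).map
          (fun v => (X 0 ^ des v * X 1 ^ (Multiset.card M + 2 + 1 - des v) :
            MvPolynomial (Fin 2) ℚ)))).sum
        = Gop (X 0 ^ des w * X 1 ^ (Multiset.card M + 1 - des w)) := by
    intro w hw
    have hlen : w.length = Multiset.card M := length_of_mem_arrangements hw
    have hx : ∀ x ∈ w, x < L := by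
      intro x hxw
      have hxM : x ∈ M := by
        rw [← mem_arrangements.1 hw]
        exact Multiset.mem_coe.2 hxw
      have := mem_msetOf_le ms x (hM ▸ hxM)
      omega
    have h := sum_gapsG w L hx (by omega)
    rw [hlen] at h
    have e2 : Multiset.card M + 2 + 1 = Multiset.card M + 3 := rfl
    rw [e2]
    exact h
  rw [List.map_congr_left hptw]
  rw [Abi, Gop_sum, List.map_map]
  rfl

/-! ### final assembly -/

lemma iterate_Teul_Gop (n : ℕ) (f : MvPolynomial (Fin 2) ℚ) :
    Teul (Gop^[n] f) = Gop^[n] (Teul f) := by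
  induction n generalizing f with
  | zero => rfl
  | succ n ih =>
    rw [Function.iterate_succ_apply, Function.iterate_succ_apply, ih, Teul_Gop_comm]

lemma Abi_eq (ms : List ℕ) (h : ∀ i ∈ ms, i = 1 ∨ i = 2) :
    Abi ms = Gop^[ms.count 2] (Teul^[ms.count 1] (X 1)) := by
  induction ms using List.reverseRecOn with
  | nil => simpa using Abi_nil
  | append_singleton ms k ih =>
    have hk := h k (by simp)
    have hms : ∀ i ∈ ms, i = 1 ∨ i = 2 := fun i hi => h i (by simp [hi])
    have hc1 : (ms ++ [k]).count 1 = ms.count 1 + [k].count 1 := List.count_append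
    have hc2 : (ms ++ [k]).count 2 = ms.count 2 + [k].count 2 := List.count_append
    rcases hk with rfl | rfl
    · rw [Abi_append_one, ih hms, hc1, hc2]
      have e1 : List.count 1 [1] = 1 := by simp
      have e2 : List.count 2 [1] = 0 := by simp
      rw [e1, e2, Nat.add_zero]
      rw [iterate_Teul_Gop, ← Function.iterate_succ_apply' Teul]
    · rw [Abi_append_two, ih hms, hc1, hc2]
      have e1 : List.count 1 [2] = 0 := by simp
      have e2 : List.count 2 [2] = 1 := by simp
      rw [e1, e2, Nat.add_zero]
      rw [← Function.iterate_succ_apply' Gop]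
      simp

/-- For a multiset with `r` letters of multiplicity 1 and `s` letters of
multiplicity 2, `A_𝐦(x,y) = G^s(T^r(x))`; in particular `A_𝐦(x,y)` depends only
on `r` and `s`, not on the order of the multiplicities. -/
theorem Abi_eq_Gs_Tr (ms : List ℕ) (hms : ∀ i ∈ ms, i = 1 ∨ i = 2)
    (r s : ℕ) (hr : ms.count 1 = r) (hs : ms.count 2 = s) (hrs : 1 ≤ r ∧ 1 ≤ s) :
    Abi ms = Gop^[s] (Teul^[r] (X 0)) ∧
      ∀ ms' : List ℕ, (∀ i ∈ ms', i = 1 ∨ i = 2) →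
        ms'.count 1 = r → ms'.count 2 = s → Abi ms' = Abi ms := by
  obtain ⟨hr1, hs1⟩ := hrs
  have hTX : Teul (X 1 : MvPolynomial (Fin 2) ℚ) = Teul (X 0) := by
    rw [Teul, Teul, pderiv_X_self, pderiv_X_self,
      pderiv_X_of_ne (show (0:Fin 2) ≠ 1 by decide),
      pderiv_X_of_ne (show (1:Fin 2) ≠ 0 by decide)]
    ring
  have key : ∀ ms' : List ℕ, (∀ i ∈ ms', i = 1 ∨ i = 2) →
      ms'.count 1 = r → ms'.count 2 = s → Abi ms' = Gop^[s] (Teul^[r] (X 0)) := by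
    intro ms' h' h1 h2
    rw [Abi_eq ms' h', h1, h2]
    congr 1
    obtain ⟨r', rfl⟩ : ∃ r', r = r' + 1 := ⟨r - 1, by omega⟩
    rw [Function.iterate_succ_apply, Function.iterate_succ_apply, hTX]
  exact ⟨key ms hms hr hs,
    fun ms' h' h1 h2 => (key ms' h' h1 h2).trans (key ms hms hr hs).symm⟩
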